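/- Let m : ℝ^(1+n) → Sym(n,ℝ) be smooth with m(x) symmetric positive definite, and let K_λ^α_ν : ℝ^(1+n) → ℝ be smooth linear connection components with K_λ⁰_ν ≡ 0 satisfying the compatibility identity ∂_λ m_{ij} + Σ_k (m_{ik} K_λ^k_j + m_{jk} K_λ^k_i) = 0 for all λ, i, j. Let γ : ℝ → ℝ^(1+n) be a geodesic of K with γ̇⁰ ≡ 1, and let u be a Jacobi field along γ such that u⁰ ≡ 0 and u(a) = u(b) = 0 for some a < b. Then ∫_a^b [ Σ_{i,j} m_{ij}(γ(t)) (∇_{γ̇}u)^i(t) (∇_{γ̇}u)^j(t) + Σ_{i,j,λ,μ,ν} m_{ij}(γ(t)) R_{λμ}^i_ν(γ(t)) u^λ(t) u^j(t) γ̇^μ(t) γ̇^ν(t) ] dt = 0. -/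

import Mathlib

/-- Partial derivative of `f : ℝ^(1+n) → ℝ` in the `μ`-th coordinate direction. -/
noncomputable def pdir {N : ℕ} (f : (Fin N → ℝ) → ℝ) (x : Fin N → ℝ) (μ : Fin N) : ℝ :=
  fderiv ℝ f x (Pi.single μ 1)

/-- Curvature tensor `R_{λμ}^α_β` of a linear connection with components
`K_λ^α_ν : ℝ^(1+n) → ℝ`. -/
noncomputable def curvR {n : ℕ}
    (K : Fin (n + 1) → Fin (n + 1) → Fin (n + 1) → (Fin (n + 1) → ℝ) → ℝ)
    (lam μ α β : Fin (n + 1)) (x : Fin (n + 1) → ℝ) : ℝ :=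
  pdir (K μ α β) x lam - pdir (K lam α β) x μ
    + ∑ g : Fin (n + 1), (K lam g β x * K μ α g x - K μ g β x * K lam α g x)

/-- Covariant derivative along a curve `γ` of a vector field `w` along `γ`,
for a linear connection with components `K_μ^α_ν`. -/
noncomputable def covD {n : ℕ}
    (K : Fin (n + 1) → Fin (n + 1) → Fin (n + 1) → (Fin (n + 1) → ℝ) → ℝ)
    (γ w : ℝ → Fin (n + 1) → ℝ) : ℝ → Fin (n + 1) → ℝ :=
  fun t α => deriv (fun s => w s α) t
    - ∑ μ : Fin (n + 1), ∑ ν : Fin (n + 1), K μ α ν (γ t) * deriv γ t μ * w t ν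

/- ### Auxiliary lemmas -/

lemma clm_apply_eq_sum {N : ℕ} (L : (Fin N → ℝ) →L[ℝ] ℝ) (y : Fin N → ℝ) :
    L y = ∑ lam : Fin N, y lam * L (Pi.single lam 1) := by
  have hy : y = ∑ lam : Fin N, y lam • (Pi.single lam (1:ℝ) : Fin N → ℝ) := by
    funext j; simp [Pi.single_apply, Finset.sum_apply]
  conv_lhs => rw [hy]
  rw [map_sum]
  simp [smul_eq_mul]

lemma hasDerivAt_comp_pdir {N : ℕ} (f : (Fin N → ℝ) → ℝ) (hf : ContDiff ℝ (⊤:ℕ∞) f)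
    (γ : ℝ → Fin N → ℝ) (hγ : ContDiff ℝ (⊤:ℕ∞) γ) (t : ℝ) :
    HasDerivAt (fun s => f (γ s)) (∑ lam : Fin N, deriv γ t lam * pdir f (γ t) lam) t := by
  have hγd := (hγ.differentiable (by simp) t).hasDerivAt
  have hfd := (hf.differentiable (by simp) (γ t)).hasFDerivAt
  have h := hfd.comp_hasDerivAt t hγd
  rw [clm_apply_eq_sum] at h
  exact h

lemma pdir_continuous {N : ℕ} (f : (Fin N → ℝ) → ℝ) (hf : ContDiff ℝ (⊤:ℕ∞) f) (μ : Fin N) :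
    Continuous fun x => pdir f x μ := by
  have h : Continuous fun x => fderiv ℝ f x := hf.continuous_fderiv (by simp)
  exact h.clm_apply continuous_const

lemma comp_proj_contDiff {N : ℕ} (w : ℝ → Fin N → ℝ) (hw : ContDiff ℝ (⊤:ℕ∞) w) (α : Fin N) :
    ContDiff ℝ (⊤:ℕ∞) fun t => w t α :=
  (ContinuousLinearMap.proj α (R := ℝ) (φ := fun _ : Fin N => ℝ)).contDiff.comp hw

lemma deriv_comp_proj {N : ℕ} (w : ℝ → Fin N → ℝ) (hw : Differentiable ℝ w) (α : Fin N) (t : ℝ) :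
    deriv (fun s => w s α) t = deriv w t α :=
  ((ContinuousLinearMap.proj α (R := ℝ) (φ := fun _ : Fin N => ℝ)).hasFDerivAt.comp_hasDerivAt
    t (hw t).hasDerivAt).deriv

lemma sum_swap24 {n N : ℕ} (f : Fin n → Fin n → Fin N → Fin n → ℝ) :
    ∑ i, ∑ j, ∑ lam, ∑ c, f i j lam c = ∑ i, ∑ j, ∑ lam, ∑ c, f i c lam j := by
  refine Finset.sum_congr rfl fun i _ => ?_
  calc ∑ j, ∑ lam, ∑ c, f i j lam c
      = ∑ lam, ∑ j, ∑ c, f i j lam c := Finset.sum_comm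
    _ = ∑ lam, ∑ c, ∑ j, f i j lam c := Finset.sum_congr rfl fun lam _ => Finset.sum_comm
    _ = ∑ j, ∑ lam, ∑ c, f i c lam j := Finset.sum_comm

lemma sum_swap14 {n N : ℕ} (f : Fin n → Fin n → Fin N → Fin n → ℝ) :
    ∑ i, ∑ j, ∑ lam, ∑ c, f i j lam c = ∑ i, ∑ j, ∑ lam, ∑ c, f c j lam i := by
  have h1 : (∑ i, ∑ j, ∑ lam, ∑ c, f i j lam c)
      = ∑ q : Fin n × Fin n × Fin N × Fin n, f q.1 q.2.1 q.2.2.1 q.2.2.2 := by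
    simp [Fintype.sum_prod_type]
  have h2 : (∑ i, ∑ j, ∑ lam, ∑ c, f c j lam i)
      = ∑ q : Fin n × Fin n × Fin N × Fin n, f q.2.2.2 q.2.1 q.2.2.1 q.1 := by
    simp [Fintype.sum_prod_type]
  rw [h1, h2]
  exact Fintype.sum_equiv ⟨fun q => (q.2.2.2, q.2.1, q.2.2.1, q.1),
    fun q => (q.2.2.2, q.2.1, q.2.2.1, q.1), fun ⟨a,b,c,d⟩ => rfl, fun ⟨a,b,c,d⟩ => rfl⟩
    _ _ (fun ⟨a,b,c,d⟩ => rfl)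

lemma key_algebra {n : ℕ} (M : Fin n → Fin n → ℝ) (hM : ∀ i j, M i j = M j i)
    (k : Fin (n+1) → Fin (n+1) → Fin (n+1) → ℝ)
    (Rr : Fin (n+1) → Fin (n+1) → Fin (n+1) → Fin (n+1) → ℝ)
    (V U W : Fin (n+1) → ℝ) (hU0 : U 0 = 0) (hW0 : W 0 = 0) :
    (∑ i : Fin n, ∑ j : Fin n,
      (((∑ lam, V lam * (-(∑ c : Fin n, (M i c * k lam c.succ j.succ + M j c * k lam c.succ i.succ)))) * W i.succ
        + M i j * ((∑ lam, ∑ μ, ∑ β, Rr lam μ i.succ β * U lam * V μ * V β)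
            + ∑ μ, ∑ ν, k μ i.succ ν * V μ * W ν)) * U j.succ
       + M i j * W i.succ * (W j.succ + ∑ μ, ∑ ν, k μ j.succ ν * V μ * U ν)))
    = (∑ i : Fin n, ∑ j : Fin n, M i j * W i.succ * W j.succ)
      + ∑ i : Fin n, ∑ j : Fin n, ∑ lam, ∑ μ, ∑ ν,
          M i j * Rr lam μ i.succ ν * U lam * U j.succ * V μ * V ν := by
  have hW' : ∀ α, (∑ μ : Fin (n+1), ∑ ν : Fin (n+1), k μ α ν * V μ * W ν)
      = ∑ μ : Fin (n+1), ∑ c : Fin n, k μ α c.succ * V μ * W c.succ := by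
    intro α
    refine Finset.sum_congr rfl fun μ _ => ?_
    rw [Fin.sum_univ_succ]
    simp [hW0]
  have hU' : ∀ α, (∑ μ : Fin (n+1), ∑ ν : Fin (n+1), k μ α ν * V μ * U ν)
      = ∑ μ : Fin (n+1), ∑ c : Fin n, k μ α c.succ * V μ * U c.succ := by
    intro α
    refine Finset.sum_congr rfl fun μ _ => ?_
    rw [Fin.sum_univ_succ]
    simp [hU0]
  have expand : ∀ i j : Fin n,
      (((∑ lam, V lam * (-(∑ c : Fin n, (M i c * k lam c.succ j.succ + M j c * k lam c.succ i.succ)))) * W i.succ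
        + M i j * ((∑ lam, ∑ μ, ∑ β, Rr lam μ i.succ β * U lam * V μ * V β)
            + ∑ μ, ∑ ν, k μ i.succ ν * V μ * W ν)) * U j.succ
       + M i j * W i.succ * (W j.succ + ∑ μ, ∑ ν, k μ j.succ ν * V μ * U ν))
      = M i j * W i.succ * W j.succ
        + (∑ lam : Fin (n+1), ∑ μ : Fin (n+1), ∑ ν : Fin (n+1),
            M i j * (Rr lam μ i.succ ν * U lam * V μ * V ν) * U j.succ)
        + ((∑ lam : Fin (n+1), ∑ c : Fin n, M i j * (k lam i.succ c.succ * V lam * W c.succ) * U j.succ)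
           + (∑ lam : Fin (n+1), ∑ c : Fin n, M i j * W i.succ * (k lam j.succ c.succ * V lam * U c.succ))
           - (∑ lam : Fin (n+1), ∑ c : Fin n, V lam * (M i c * k lam c.succ j.succ) * W i.succ * U j.succ)
           - (∑ lam : Fin (n+1), ∑ c : Fin n, V lam * (M j c * k lam c.succ i.succ) * W i.succ * U j.succ)) := by
    intro i j
    rw [hW', hU']
    simp only [Finset.mul_sum, Finset.sum_mul, mul_neg, neg_mul, mul_add, add_mul, mul_sub,
      sub_mul, Finset.sum_add_distrib, Finset.sum_sub_distrib, Finset.sum_neg_distrib]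
    ring
  calc (∑ i : Fin n, ∑ j : Fin n,
      (((∑ lam, V lam * (-(∑ c : Fin n, (M i c * k lam c.succ j.succ + M j c * k lam c.succ i.succ)))) * W i.succ
        + M i j * ((∑ lam, ∑ μ, ∑ β, Rr lam μ i.succ β * U lam * V μ * V β)
            + ∑ μ, ∑ ν, k μ i.succ ν * V μ * W ν)) * U j.succ
       + M i j * W i.succ * (W j.succ + ∑ μ, ∑ ν, k μ j.succ ν * V μ * U ν)))
      = ∑ i : Fin n, ∑ j : Fin n,
        (M i j * W i.succ * W j.succ
        + (∑ lam : Fin (n+1), ∑ μ : Fin (n+1), ∑ ν : Fin (n+1),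
            M i j * (Rr lam μ i.succ ν * U lam * V μ * V ν) * U j.succ)
        + ((∑ lam : Fin (n+1), ∑ c : Fin n, M i j * (k lam i.succ c.succ * V lam * W c.succ) * U j.succ)
           + (∑ lam : Fin (n+1), ∑ c : Fin n, M i j * W i.succ * (k lam j.succ c.succ * V lam * U c.succ))
           - (∑ lam : Fin (n+1), ∑ c : Fin n, V lam * (M i c * k lam c.succ j.succ) * W i.succ * U j.succ)
           - (∑ lam : Fin (n+1), ∑ c : Fin n, V lam * (M j c * k lam c.succ i.succ) * W i.succ * U j.succ))) :=
        Finset.sum_congr rfl fun i _ => Finset.sum_congr rfl fun j _ => expand i j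
    _ = (∑ i : Fin n, ∑ j : Fin n, M i j * W i.succ * W j.succ)
      + ∑ i : Fin n, ∑ j : Fin n, ∑ lam, ∑ μ, ∑ ν,
          M i j * Rr lam μ i.succ ν * U lam * U j.succ * V μ * V ν := ?_
  · simp only [Finset.sum_add_distrib, Finset.sum_sub_distrib]
    have hS5 : (∑ i : Fin n, ∑ j : Fin n, ∑ lam : Fin (n+1), ∑ c : Fin n,
          M i j * W i.succ * (k lam j.succ c.succ * V lam * U c.succ))
        = ∑ i : Fin n, ∑ j : Fin n, ∑ lam : Fin (n+1), ∑ c : Fin n,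
          V lam * (M i c * k lam c.succ j.succ) * W i.succ * U j.succ := by
      refine (sum_swap24 fun i j lam c =>
        M i j * W i.succ * (k lam j.succ c.succ * V lam * U c.succ)).trans ?_
      exact Finset.sum_congr rfl fun i _ => Finset.sum_congr rfl fun j _ =>
        Finset.sum_congr rfl fun lam _ => Finset.sum_congr rfl fun c _ => by ring
    have hS3 : (∑ i : Fin n, ∑ j : Fin n, ∑ lam : Fin (n+1), ∑ c : Fin n,
          M i j * (k lam i.succ c.succ * V lam * W c.succ) * U j.succ)
        = ∑ i : Fin n, ∑ j : Fin n, ∑ lam : Fin (n+1), ∑ c : Fin n,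
          V lam * (M j c * k lam c.succ i.succ) * W i.succ * U j.succ := by
      refine (sum_swap14 fun i j lam c =>
        M i j * (k lam i.succ c.succ * V lam * W c.succ) * U j.succ).trans ?_
      refine Finset.sum_congr rfl fun i _ => Finset.sum_congr rfl fun j _ =>
        Finset.sum_congr rfl fun lam _ => Finset.sum_congr rfl fun c _ => ?_
      rw [hM c j]
      ring
    have hR : (∑ i : Fin n, ∑ j : Fin n, ∑ lam : Fin (n+1), ∑ μ : Fin (n+1), ∑ ν : Fin (n+1),
          M i j * (Rr lam μ i.succ ν * U lam * V μ * V ν) * U j.succ)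
        = ∑ i : Fin n, ∑ j : Fin n, ∑ lam : Fin (n+1), ∑ μ : Fin (n+1), ∑ ν : Fin (n+1),
          M i j * Rr lam μ i.succ ν * U lam * U j.succ * V μ * V ν :=
      Finset.sum_congr rfl fun i _ => Finset.sum_congr rfl fun j _ =>
        Finset.sum_congr rfl fun lam _ => Finset.sum_congr rfl fun μ _ =>
        Finset.sum_congr rfl fun ν _ => by ring
    rw [hS5, hS3, hR]
    ring

/-- the integral formula (995) for a Jacobi field `u` with
vanishing temporal component, vanishing at the endpoints `a < b`, along a
geodesic `γ` (with `γ̇⁰ = 1`) of a quadratic Newtonian system with Riemannian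
mass tensor `m` compatible with the connection `K`. -/
theorem jacobi_field_integral_formula (n : ℕ)
    (m : (Fin (n + 1) → ℝ) → Matrix (Fin n) (Fin n) ℝ)
    (hm : ∀ i j, ContDiff ℝ (⊤ : ℕ∞) fun x => m x i j)
    (hmpos : ∀ x, (m x).PosDef)
    (K : Fin (n + 1) → Fin (n + 1) → Fin (n + 1) → (Fin (n + 1) → ℝ) → ℝ)
    (hK : ∀ lam α ν, ContDiff ℝ (⊤ : ℕ∞) (K lam α ν))
    (hKtemp : ∀ (lam ν : Fin (n + 1)) (x : Fin (n + 1) → ℝ), K lam 0 ν x = 0)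
    (hcompat : ∀ (x : Fin (n + 1) → ℝ) (lam : Fin (n + 1)) (i j : Fin n),
      pdir (fun y => m y i j) x lam
        + ∑ k : Fin n, (m x i k * K lam k.succ j.succ x
            + m x j k * K lam k.succ i.succ x) = 0)
    (γ : ℝ → Fin (n + 1) → ℝ) (hγ : ContDiff ℝ (⊤ : ℕ∞) γ)
    (hgeo : ∀ (t : ℝ) (α : Fin (n + 1)), deriv (deriv γ) t α =
      ∑ lam : Fin (n + 1), ∑ ν : Fin (n + 1),
        K lam α ν (γ t) * deriv γ t lam * deriv γ t ν)
    (hγ0 : ∀ t, deriv γ t 0 = 1)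
    (u : ℝ → Fin (n + 1) → ℝ) (hu : ContDiff ℝ (⊤ : ℕ∞) u)
    (hjacobi : ∀ (t : ℝ) (α : Fin (n + 1)), covD K γ (covD K γ u) t α =
      ∑ lam : Fin (n + 1), ∑ μ : Fin (n + 1), ∑ β : Fin (n + 1),
        curvR K lam μ α β (γ t) * u t lam * deriv γ t μ * deriv γ t β)
    (hu0 : ∀ t, u t 0 = 0)
    (a b : ℝ) (hab : a < b) (hua : u a = 0) (hub : u b = 0) :
    ∫ t in a..b,
      ((∑ i : Fin n, ∑ j : Fin n,
          m (γ t) i j * covD K γ u t i.succ * covD K γ u t j.succ)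
        + ∑ i : Fin n, ∑ j : Fin n, ∑ lam : Fin (n + 1),
            ∑ μ : Fin (n + 1), ∑ ν : Fin (n + 1),
          m (γ t) i j * curvR K lam μ i.succ ν (γ t)
            * u t lam * u t j.succ * deriv γ t μ * deriv γ t ν) = 0 := by
  have hud : Differentiable ℝ u := hu.differentiable (by simp)
  have hγd : Differentiable ℝ γ := hγ.differentiable (by simp)
  have hvγ : ContDiff ℝ (⊤:ℕ∞) (deriv γ) := (contDiff_infty_iff_deriv.mp hγ).2
  have hvu : ContDiff ℝ (⊤:ℕ∞) (deriv u) := (contDiff_infty_iff_deriv.mp hu).2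
  have hDuc : ∀ α, ContDiff ℝ (⊤:ℕ∞) fun t => covD K γ u t α := by
    intro α
    have heq : (fun t => covD K γ u t α) = fun t =>
        deriv u t α - ∑ μ : Fin (n+1), ∑ ν : Fin (n+1), K μ α ν (γ t) * deriv γ t μ * u t ν := by
      funext t
      simp only [covD]
      rw [deriv_comp_proj u hud α t]
    rw [heq]
    refine (comp_proj_contDiff _ hvu α).sub ?_
    refine ContDiff.sum fun μ _ => ContDiff.sum fun ν _ => ?_
    exact (((hK μ α ν).comp hγ).mul (comp_proj_contDiff _ hvγ μ)).mul (comp_proj_contDiff u hu ν)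
  have hDu0 : ∀ t, covD K γ u t 0 = 0 := by
    intro t
    have h0 : (fun s => u s 0) = fun _ => (0:ℝ) := funext fun s => hu0 s
    simp [covD, h0, hKtemp]
  have hMsymm : ∀ (x : Fin (n+1) → ℝ) (i j : Fin n), m x i j = m x j i := by
    intro x i j
    have := (hmpos x).1.apply i j
    simpa using this.symm
  have hpdir : ∀ (t : ℝ) (lam : Fin (n+1)) (i j : Fin n),
      pdir (fun y => m y i j) (γ t) lam
        = -(∑ c : Fin n, (m (γ t) i c * K lam c.succ j.succ (γ t)
            + m (γ t) j c * K lam c.succ i.succ (γ t))) := by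
    intro t lam i j
    have := hcompat (γ t) lam i j
    linarith
  have hF : ∀ t : ℝ, HasDerivAt
      (fun s => ∑ i : Fin n, ∑ j : Fin n, m (γ s) i j * covD K γ u s i.succ * u s j.succ)
      ((∑ i : Fin n, ∑ j : Fin n,
          m (γ t) i j * covD K γ u t i.succ * covD K γ u t j.succ)
        + ∑ i : Fin n, ∑ j : Fin n, ∑ lam : Fin (n + 1),
            ∑ μ : Fin (n + 1), ∑ ν : Fin (n + 1),
          m (γ t) i j * curvR K lam μ i.succ ν (γ t)
            * u t lam * u t j.succ * deriv γ t μ * deriv γ t ν) t := by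
    intro t
    have h2 : ∀ α, HasDerivAt (fun s => covD K γ u s α)
        (covD K γ (covD K γ u) t α
          + ∑ μ : Fin (n+1), ∑ ν : Fin (n+1), K μ α ν (γ t) * deriv γ t μ * covD K γ u t ν) t := by
      intro α
      have hd := ((hDuc α).differentiable (by simp) t).hasDerivAt
      have he : covD K γ (covD K γ u) t α
          + ∑ μ : Fin (n+1), ∑ ν : Fin (n+1), K μ α ν (γ t) * deriv γ t μ * covD K γ u t ν
          = deriv (fun s => covD K γ u s α) t := by
        rw [show covD K γ (covD K γ u) t α = deriv (fun s => covD K γ u s α) t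
          - ∑ μ : Fin (n+1), ∑ ν : Fin (n+1),
              K μ α ν (γ t) * deriv γ t μ * covD K γ u t ν from rfl]
        ring
      rw [he]
      exact hd
    have h3 : ∀ α, HasDerivAt (fun s => u s α)
        (covD K γ u t α
          + ∑ μ : Fin (n+1), ∑ ν : Fin (n+1), K μ α ν (γ t) * deriv γ t μ * u t ν) t := by
      intro α
      have hd := ((comp_proj_contDiff u hu α).differentiable (by simp) t).hasDerivAt
      have he : covD K γ u t α
          + ∑ μ : Fin (n+1), ∑ ν : Fin (n+1), K μ α ν (γ t) * deriv γ t μ * u t ν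
          = deriv (fun s => u s α) t := by
        rw [show covD K γ u t α = deriv (fun s => u s α) t
          - ∑ μ : Fin (n+1), ∑ ν : Fin (n+1), K μ α ν (γ t) * deriv γ t μ * u t ν from rfl]
        ring
      rw [he]
      exact hd
    have h1 : ∀ i j : Fin n, HasDerivAt (fun s => m (γ s) i j)
        (∑ lam : Fin (n+1), deriv γ t lam * pdir (fun y => m y i j) (γ t) lam) t :=
      fun i j => hasDerivAt_comp_pdir _ (hm i j) γ hγ t
    have hbig := HasDerivAt.sum (fun i (_ : i ∈ (Finset.univ : Finset (Fin n))) =>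
      HasDerivAt.sum (fun j (_ : j ∈ (Finset.univ : Finset (Fin n))) =>
        ((h1 i j).mul (h2 i.succ)).mul (h3 j.succ)))
    have hEG : (∑ i : Fin n, ∑ j : Fin n,
        (((∑ lam : Fin (n+1), deriv γ t lam * pdir (fun y => m y i j) (γ t) lam)
            * covD K γ u t i.succ
          + m (γ t) i j * (covD K γ (covD K γ u) t i.succ
              + ∑ μ : Fin (n+1), ∑ ν : Fin (n+1),
                  K μ i.succ ν (γ t) * deriv γ t μ * covD K γ u t ν)) * u t j.succ
         + m (γ t) i j * covD K γ u t i.succ * (covD K γ u t j.succ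
              + ∑ μ : Fin (n+1), ∑ ν : Fin (n+1),
                  K μ j.succ ν (γ t) * deriv γ t μ * u t ν)))
        = ((∑ i : Fin n, ∑ j : Fin n,
            m (γ t) i j * covD K γ u t i.succ * covD K γ u t j.succ)
          + ∑ i : Fin n, ∑ j : Fin n, ∑ lam : Fin (n + 1),
              ∑ μ : Fin (n + 1), ∑ ν : Fin (n + 1),
            m (γ t) i j * curvR K lam μ i.succ ν (γ t)
              * u t lam * u t j.succ * deriv γ t μ * deriv γ t ν) := by
      simp only [hpdir t, hjacobi]
      exact key_algebra (fun i j => m (γ t) i j) (fun i j => hMsymm (γ t) i j)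
        (fun lam α ν => K lam α ν (γ t)) (fun lam μ α β => curvR K lam μ α β (γ t))
        (deriv γ t) (u t) (covD K γ u t) (hu0 t) (hDu0 t)
    rw [← hEG]
    refine hbig.congr_of_eventuallyEq (Filter.Eventually.of_forall fun s => ?_)
    simp [Finset.sum_apply]
  have hGcont : Continuous fun t =>
      ((∑ i : Fin n, ∑ j : Fin n,
          m (γ t) i j * covD K γ u t i.succ * covD K γ u t j.succ)
        + ∑ i : Fin n, ∑ j : Fin n, ∑ lam : Fin (n + 1),
            ∑ μ : Fin (n + 1), ∑ ν : Fin (n + 1),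
          m (γ t) i j * curvR K lam μ i.succ ν (γ t)
            * u t lam * u t j.succ * deriv γ t μ * deriv γ t ν) := by
    refine Continuous.add ?_ ?_
    · refine continuous_finset_sum _ fun i _ => continuous_finset_sum _ fun j _ => ?_
      exact (((hm i j).continuous.comp hγ.continuous).mul (hDuc i.succ).continuous).mul
        (hDuc j.succ).continuous
    · refine continuous_finset_sum _ fun i _ => continuous_finset_sum _ fun j _ =>
        continuous_finset_sum _ fun lam _ => continuous_finset_sum _ fun μ _ =>
        continuous_finset_sum _ fun ν _ => ?_
      have hcurv : Continuous fun x => curvR K lam μ i.succ ν x := by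
        refine (((pdir_continuous _ (hK μ i.succ ν) lam).sub
          (pdir_continuous _ (hK lam i.succ ν) μ)).add
          (continuous_finset_sum _ fun g _ => ((hK lam g ν).continuous.mul
            (hK μ i.succ g).continuous).sub
            ((hK μ g ν).continuous.mul (hK lam i.succ g).continuous)))
      exact (((((((hm i j).continuous.comp hγ.continuous).mul
        (hcurv.comp hγ.continuous)).mul
        (comp_proj_contDiff u hu lam).continuous).mul
        (comp_proj_contDiff u hu j.succ).continuous).mul
        (comp_proj_contDiff _ hvγ μ).continuous).mul
        (comp_proj_contDiff _ hvγ ν).continuous)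
  rw [intervalIntegral.integral_eq_sub_of_hasDerivAt (fun t _ => hF t)
    (hGcont.intervalIntegrable a b)]
  simp [hua, hub]
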